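/- Let n be an even positive integer, let c ∈ [-1:1]^n with solution profile π(z) = #{i : c_i = z}, and suppose π(1) = π(−1), π(0) is even, and e is an integer with 0 ≤ e ≤ π(1). Define the set of good solution pairs G(c) as the set of pairs (a, b) ∈ [0:2]^n × [0:2]^n such that (i) #a^{−1}(1) = #b^{−1}(1) = n/2 and #a^{−1}(2) = #b^{−1}(2) = e; (ii) a − b = c; and (iii) for every i with c_i = 0, (a_i, b_i) ∈ {(0,0), (1,1)}. Then |G(c)| = C(π(1), e) · C(π(−1), e) · C(π(0), π(0)/2), where C(·,·) denotes the binomial coefficient. -/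
import Mathlib


/-- Number of good solution pairs for Equal Subset Sum:
|G(c)| = C(π(1), e) · C(π(−1), e) · C(π(0), π(0)/2). -/
theorem stmt_7 (n : ℕ) (hn : 0 < n) (hneven : Even n)
    (c : Fin n → ℤ) (hc : ∀ i, c i ∈ Finset.Icc (-1 : ℤ) 1)
    (π : ℤ → ℕ) (hπ : ∀ z, π z = (Finset.univ.filter fun i => c i = z).card)
    (hbal : π 1 = π (-1)) (hev : Even (π 0))
    (e : ℕ) (he : e ≤ π 1) :
    Set.ncard {p : (Fin n → ℤ) × (Fin n → ℤ) |
        (∀ i, p.1 i ∈ Finset.Icc (0 : ℤ) 2) ∧ (∀ i, p.2 i ∈ Finset.Icc (0 : ℤ) 2) ∧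
        (Finset.univ.filter fun i => p.1 i = 1).card = n / 2 ∧
        (Finset.univ.filter fun i => p.2 i = 1).card = n / 2 ∧
        (Finset.univ.filter fun i => p.1 i = 2).card = e ∧
        (Finset.univ.filter fun i => p.2 i = 2).card = e ∧
        p.1 - p.2 = c ∧
        (∀ i, c i = 0 → (p.1 i = 0 ∧ p.2 i = 0) ∨ (p.1 i = 1 ∧ p.2 i = 1))} =
      Nat.choose (π 1) e * Nat.choose (π (-1)) e * Nat.choose (π 0) (π 0 / 2) := by
  classical
  have hc3 : ∀ i, c i = -1 ∨ c i = 0 ∨ c i = 1 := by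
    intro i; have := hc i; simp only [Finset.mem_Icc] at this; omega
  set P := Finset.univ.filter (fun i => c i = 1) with hPdef
  set M := Finset.univ.filter (fun i => c i = (-1:ℤ)) with hMdef
  set Z := Finset.univ.filter (fun i => c i = 0) with hZdef
  have hPcard : P.card = π 1 := (hπ 1).symm
  have hMcard : M.card = π (-1) := (hπ (-1)).symm
  have hZcard : Z.card = π 0 := (hπ 0).symm
  set h := π 0 / 2 with hhdef
  -- splitting counting lemma
  have hsplit : ∀ (q : Fin n → Prop) (_ : DecidablePred q),
      (Finset.univ.filter q).card
        = (P.filter q).card + (M.filter q).card + (Z.filter q).card := by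
    intro q _
    have h1 : Finset.univ.filter q = (P.filter q) ∪ ((M.filter q) ∪ (Z.filter q)) := by
      ext i
      simp only [Finset.mem_filter, Finset.mem_union, Finset.mem_univ, true_and,
        hPdef, hMdef, hZdef]
      rcases hc3 i with hci | hci | hci <;> simp [hci] <;> tauto
    rw [h1, Finset.card_union_of_disjoint, Finset.card_union_of_disjoint, add_assoc]
    · simp only [Finset.disjoint_left, Finset.mem_filter, Finset.mem_univ, true_and,
        hMdef, hZdef]
      rintro i ⟨hi, _⟩ ⟨hi', _⟩; omega
    · simp only [Finset.disjoint_left, Finset.mem_filter, Finset.mem_union, Finset.mem_univ,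
        true_and, hPdef, hMdef, hZdef]
      rintro i ⟨hi, _⟩ (⟨hi', _⟩ | ⟨hi', _⟩) <;> omega
  have hn_sum : n = P.card + M.card + Z.card := by
    have h1 := hsplit (fun _ => True) inferInstance
    simpa using h1
  have hh2 : π 0 = h + h := by
    obtain ⟨r, hr⟩ := hev; omega
  have hn2 : n / 2 = π 1 + h := by
    rw [hPcard, hMcard, hZcard] at hn_sum; omega
  -- the encoding map
  set A : Finset (Fin n) × Finset (Fin n) × Finset (Fin n) → (Fin n → ℤ) := fun x i =>
    if c i = 1 then (if i ∈ x.1 then 2 else 1)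
    else if c i = -1 then (if i ∈ x.2.1 then 1 else 0)
    else (if i ∈ x.2.2 then 1 else 0) with hAdef
  set F : Finset (Fin n) × Finset (Fin n) × Finset (Fin n) → (Fin n → ℤ) × (Fin n → ℤ) :=
    fun x => (A x, A x - c) with hFdef
  set D := ((P.powersetCard e) ×ˢ (M.powersetCard e) ×ˢ (Z.powersetCard h)).image F with hDdef
  have key : {p : (Fin n → ℤ) × (Fin n → ℤ) |
        (∀ i, p.1 i ∈ Finset.Icc (0 : ℤ) 2) ∧ (∀ i, p.2 i ∈ Finset.Icc (0 : ℤ) 2) ∧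
        (Finset.univ.filter fun i => p.1 i = 1).card = n / 2 ∧
        (Finset.univ.filter fun i => p.2 i = 1).card = n / 2 ∧
        (Finset.univ.filter fun i => p.1 i = 2).card = e ∧
        (Finset.univ.filter fun i => p.2 i = 2).card = e ∧
        p.1 - p.2 = c ∧
        (∀ i, c i = 0 → (p.1 i = 0 ∧ p.2 i = 0) ∨ (p.1 i = 1 ∧ p.2 i = 1))} = ↑D := by
    ext p
    simp only [hDdef, Set.mem_setOf_eq, Finset.coe_image, Set.mem_image, Finset.mem_coe,
      Finset.mem_product, Finset.mem_powersetCard]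
    constructor
    · rintro ⟨h1, h2, h3, h4, h5, h6, h7, h8⟩
      have hb1 : ∀ i, 0 ≤ p.1 i ∧ p.1 i ≤ 2 := by
        intro i; have := h1 i; simpa [Finset.mem_Icc] using this
      have hb2 : ∀ i, 0 ≤ p.2 i ∧ p.2 i ≤ 2 := by
        intro i; have := h2 i; simpa [Finset.mem_Icc] using this
      have hsub : ∀ i, p.1 i - p.2 i = c i := by
        intro i; have := congrFun h7 i; simpa using this
      refine ⟨(Finset.univ.filter fun i => p.1 i = 2,
               Finset.univ.filter fun i => p.2 i = 2,
               Z.filter fun i => p.1 i = 1), ⟨⟨?_, ?_⟩, ⟨?_, ?_⟩, ⟨?_, ?_⟩⟩, ?_⟩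
      · -- S ⊆ P
        intro i hi
        simp only [Finset.mem_filter, Finset.mem_univ, true_and] at hi
        simp only [hPdef, Finset.mem_filter, Finset.mem_univ, true_and]
        rcases hc3 i with hci | hci | hci
        · have := hb2 i; have := hsub i; omega
        · rcases h8 i hci with ⟨u, v⟩ | ⟨u, v⟩ <;> omega
        · exact hci
      · simpa using h5
      · -- T ⊆ M
        intro i hi
        simp only [Finset.mem_filter, Finset.mem_univ, true_and] at hi
        simp only [hMdef, Finset.mem_filter, Finset.mem_univ, true_and]
        rcases hc3 i with hci | hci | hci
        · exact hci
        · rcases h8 i hci with ⟨u, v⟩ | ⟨u, v⟩ <;> omega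
        · have := hb1 i; have := hsub i; omega
      · simpa using h6
      · exact Finset.filter_subset _ _
      · -- card of U
        show (Z.filter fun i => p.1 i = 1).card = h
        have hPf : P.filter (fun i => p.1 i = 1)
            = P \ (Finset.univ.filter fun i => p.1 i = 2) := by
          ext i
          simp only [hPdef, Finset.mem_filter, Finset.mem_sdiff, Finset.mem_univ, true_and]
          have := hb1 i; have := hb2 i; have := hsub i
          constructor
          · rintro ⟨hci, hv⟩; exact ⟨hci, by omega⟩
          · rintro ⟨hci, hv⟩; exact ⟨hci, by omega⟩
        have hMf : M.filter (fun i => p.1 i = 1)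
            = Finset.univ.filter fun i => p.2 i = 2 := by
          ext i
          simp only [hMdef, Finset.mem_filter, Finset.mem_univ, true_and]
          have := hb1 i; have := hb2 i; have := hsub i
          constructor
          · rintro ⟨hci, hv⟩; omega
          · intro hv
            rcases hc3 i with hci | hci | hci
            · exact ⟨hci, by omega⟩
            · rcases h8 i hci with ⟨u, v⟩ | ⟨u, v⟩ <;> omega
            · omega
        have hcount := hsplit (fun i => p.1 i = 1) inferInstance
        rw [h3, hPf, hMf] at hcount
        have hSsub : (Finset.univ.filter fun i => p.1 i = 2) ⊆ P := by
          intro i hi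
          simp only [Finset.mem_filter, Finset.mem_univ, true_and] at hi
          simp only [hPdef, Finset.mem_filter, Finset.mem_univ, true_and]
          rcases hc3 i with hci | hci | hci
          · have := hb2 i; have := hsub i; omega
          · rcases h8 i hci with ⟨u, v⟩ | ⟨u, v⟩ <;> omega
          · exact hci
        have hcs : (P \ (Finset.univ.filter fun i => p.1 i = 2)).card = π 1 - e := by
          rw [Finset.card_sdiff_of_subset hSsub, hPcard, h5]
        rw [hcs, h6] at hcount
        omega
      · -- F x = p
        have hfst : A (Finset.univ.filter fun i => p.1 i = 2,
               Finset.univ.filter fun i => p.2 i = 2,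
               Z.filter fun i => p.1 i = 1) = p.1 := by
          funext i
          have := hb1 i; have := hb2 i; have := hsub i
          simp only [hAdef, hZdef, Finset.mem_filter, Finset.mem_univ, true_and]
          rcases hc3 i with hci | hci | hci
          · simp only [hci]
            norm_num
            split_ifs <;> omega
          · rcases h8 i hci with ⟨u, v⟩ | ⟨u, v⟩ <;> simp [hci] <;> split_ifs <;> omega
          · simp only [hci, if_pos rfl]
            split_ifs <;> omega
        refine Prod.ext ?_ ?_
        · simpa [hFdef] using hfst
        · simp only [hFdef]
          rw [hfst]
          funext i
          have := hsub i
          simp only [Pi.sub_apply]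
          omega
    · rintro ⟨x, ⟨⟨hS, hSc⟩, ⟨hT, hTc⟩, ⟨hU, hUc⟩⟩, hFx⟩
      obtain ⟨S, T, U⟩ := x
      simp only at hS hT hU hSc hTc hUc
      have hSP : ∀ i ∈ S, c i = 1 := by
        intro i hi; have := hS hi
        simpa [hPdef, Finset.mem_filter] using this
      have hTM : ∀ i ∈ T, c i = -1 := by
        intro i hi; have := hT hi
        simpa [hMdef, Finset.mem_filter] using this
      have hUZ : ∀ i ∈ U, c i = 0 := by
        intro i hi; have := hU hi
        simpa [hZdef, Finset.mem_filter] using this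
      have hAval : ∀ i, A (S, T, U) i =
          if c i = 1 then (if i ∈ S then 2 else 1)
          else if c i = -1 then (if i ∈ T then 1 else 0)
          else (if i ∈ U then 1 else 0) := fun i => rfl
      subst hFx
      simp only [hFdef]
      refine ⟨?_, ?_, ?_, ?_, ?_, ?_, ?_, ?_⟩
      · intro i
        rw [Finset.mem_Icc, hAval i]
        rcases hc3 i with hci | hci | hci <;> simp [hci] <;> split_ifs <;> norm_num
      · intro i
        rw [Finset.mem_Icc]
        simp only [Pi.sub_apply]
        rw [hAval i]
        rcases hc3 i with hci | hci | hci <;> simp [hci] <;> split_ifs <;> norm_num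
      · -- card a = 1
        have hcount := hsplit (fun i => A (S, T, U) i = 1) inferInstance
        have hPf : P.filter (fun i => A (S, T, U) i = 1) = P \ S := by
          ext i
          simp only [hPdef, Finset.mem_filter, Finset.mem_sdiff, Finset.mem_univ, true_and]
          constructor
          · rintro ⟨hci, hv⟩
            rw [hAval i] at hv
            simp only [hci, if_pos rfl] at hv
            refine ⟨hci, fun hiS => by simp [hiS] at hv⟩
          · rintro ⟨hci, hiS⟩
            refine ⟨hci, ?_⟩
            rw [hAval i]; simp [hci, hiS]
        have hMf : M.filter (fun i => A (S, T, U) i = 1) = T := by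
          ext i
          simp only [hMdef, Finset.mem_filter, Finset.mem_univ, true_and]
          constructor
          · rintro ⟨hci, hv⟩
            rw [hAval i] at hv
            simp only [hci] at hv
            norm_num at hv
            by_contra hiT
            simp [hiT] at hv
          · intro hiT
            have hci := hTM i hiT
            refine ⟨hci, ?_⟩
            rw [hAval i]; simp [hci, hiT]
        have hZf : Z.filter (fun i => A (S, T, U) i = 1) = U := by
          ext i
          simp only [hZdef, Finset.mem_filter, Finset.mem_univ, true_and]
          constructor
          · rintro ⟨hci, hv⟩
            rw [hAval i] at hv
            simp only [hci] at hv
            norm_num at hv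
            by_contra hiU
            simp [hiU] at hv
          · intro hiU
            have hci := hUZ i hiU
            refine ⟨hci, ?_⟩
            rw [hAval i]; simp [hci, hiU]
        rw [hPf, hMf, hZf, Finset.card_sdiff_of_subset hS, hPcard, hSc, hTc, hUc] at hcount
        rw [hcount]; omega
      · -- card b = 1
        have hcount := hsplit (fun i => (A (S, T, U) - c) i = 1) inferInstance
        have hPf : P.filter (fun i => (A (S, T, U) - c) i = 1) = S := by
          ext i
          simp only [hPdef, Finset.mem_filter, Finset.mem_univ, true_and, Pi.sub_apply]
          constructor
          · rintro ⟨hci, hv⟩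
            rw [hAval i] at hv
            simp only [hci] at hv
            norm_num at hv
            by_contra hiS
            simp [hiS] at hv
          · intro hiS
            have hci := hSP i hiS
            refine ⟨hci, ?_⟩
            rw [hAval i]; simp [hci, hiS]
        have hMf : M.filter (fun i => (A (S, T, U) - c) i = 1) = M \ T := by
          ext i
          simp only [hMdef, Finset.mem_filter, Finset.mem_sdiff, Finset.mem_univ, true_and,
            Pi.sub_apply]
          constructor
          · rintro ⟨hci, hv⟩
            rw [hAval i] at hv
            simp only [hci] at hv
            norm_num at hv
            refine ⟨hci, fun hiT => by simp [hiT] at hv⟩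
          · rintro ⟨hci, hiT⟩
            refine ⟨hci, ?_⟩
            rw [hAval i]; simp [hci, hiT]
        have hZf : Z.filter (fun i => (A (S, T, U) - c) i = 1) = U := by
          ext i
          simp only [hZdef, Finset.mem_filter, Finset.mem_univ, true_and, Pi.sub_apply]
          constructor
          · rintro ⟨hci, hv⟩
            rw [hAval i] at hv
            simp only [hci] at hv
            norm_num at hv
            by_contra hiU
            simp [hiU] at hv
          · intro hiU
            have hci := hUZ i hiU
            refine ⟨hci, ?_⟩
            rw [hAval i]; simp [hci, hiU]
        rw [hPf, hMf, hZf, Finset.card_sdiff_of_subset hT, hMcard, hSc, hTc, hUc] at hcount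
        rw [hcount]; omega
      · -- card a = 2
        have hcount := hsplit (fun i => A (S, T, U) i = 2) inferInstance
        have hPf : P.filter (fun i => A (S, T, U) i = 2) = S := by
          ext i
          simp only [hPdef, Finset.mem_filter, Finset.mem_univ, true_and]
          constructor
          · rintro ⟨hci, hv⟩
            rw [hAval i] at hv
            simp only [hci] at hv
            norm_num at hv
            by_contra hiS
            simp [hiS] at hv
          · intro hiS
            have hci := hSP i hiS
            refine ⟨hci, ?_⟩
            rw [hAval i]; simp [hci, hiS]
        have hMf : M.filter (fun i => A (S, T, U) i = 2) = ∅ := by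
          rw [Finset.eq_empty_iff_forall_notMem]
          intro i hi
          simp only [hMdef, Finset.mem_filter, Finset.mem_univ, true_and] at hi
          obtain ⟨hci, hv⟩ := hi
          rw [hAval i] at hv
          simp only [hci] at hv
          norm_num at hv
          split_ifs at hv <;> omega
        have hZf : Z.filter (fun i => A (S, T, U) i = 2) = ∅ := by
          rw [Finset.eq_empty_iff_forall_notMem]
          intro i hi
          simp only [hZdef, Finset.mem_filter, Finset.mem_univ, true_and] at hi
          obtain ⟨hci, hv⟩ := hi
          rw [hAval i] at hv
          simp only [hci] at hv
          norm_num at hv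
          split_ifs at hv <;> omega
        rw [hPf, hMf, hZf, hSc] at hcount
        simpa using hcount
      · -- card b = 2
        have hcount := hsplit (fun i => (A (S, T, U) - c) i = 2) inferInstance
        have hPf : P.filter (fun i => (A (S, T, U) - c) i = 2) = ∅ := by
          rw [Finset.eq_empty_iff_forall_notMem]
          intro i hi
          simp only [hPdef, Finset.mem_filter, Finset.mem_univ, true_and, Pi.sub_apply] at hi
          obtain ⟨hci, hv⟩ := hi
          rw [hAval i] at hv
          simp only [hci] at hv
          norm_num at hv
          split_ifs at hv <;> omega
        have hMf : M.filter (fun i => (A (S, T, U) - c) i = 2) = T := by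
          ext i
          simp only [hMdef, Finset.mem_filter, Finset.mem_univ, true_and, Pi.sub_apply]
          constructor
          · rintro ⟨hci, hv⟩
            rw [hAval i] at hv
            simp only [hci] at hv
            norm_num at hv
            by_contra hiT
            simp [hiT] at hv
          · intro hiT
            have hci := hTM i hiT
            refine ⟨hci, ?_⟩
            rw [hAval i]; simp [hci, hiT]
        have hZf : Z.filter (fun i => (A (S, T, U) - c) i = 2) = ∅ := by
          rw [Finset.eq_empty_iff_forall_notMem]
          intro i hi
          simp only [hZdef, Finset.mem_filter, Finset.mem_univ, true_and, Pi.sub_apply] at hi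
          obtain ⟨hci, hv⟩ := hi
          rw [hAval i] at hv
          simp only [hci] at hv
          norm_num at hv
          split_ifs at hv <;> omega
        rw [hPf, hMf, hZf, hTc] at hcount
        simpa using hcount
      · funext i; simp
      · intro i hci
        have hv := hAval i
        simp only [hci] at hv
        norm_num at hv
        simp only [Pi.sub_apply, hci, sub_zero]
        by_cases hiU : i ∈ U
        · right; simp [hv, hiU]
        · left; simp [hv, hiU]
  rw [key, Set.ncard_coe_finset, hDdef]
  rw [Finset.card_image_of_injOn]
  · rw [Finset.card_product, Finset.card_product, Finset.card_powersetCard,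
      Finset.card_powersetCard, Finset.card_powersetCard, hPcard, hMcard, hZcard]
    ring
  · -- injectivity
    intro x hx y hy hxy
    simp only [Finset.coe_product, Set.mem_prod, Finset.mem_coe, Finset.mem_powersetCard] at hx hy
    have hA : A x = A y := congrArg Prod.fst hxy
    have hAx : ∀ i, A x i = A y i := fun i => congrFun hA i
    obtain ⟨S, T, U⟩ := x
    obtain ⟨S', T', U'⟩ := y
    obtain ⟨⟨hS, _⟩, ⟨hT, _⟩, ⟨hU, _⟩⟩ := hx
    obtain ⟨⟨hS', _⟩, ⟨hT', _⟩, ⟨hU', _⟩⟩ := hy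
    have hSP : ∀ i ∈ S, c i = 1 := by
      intro i hi; have := hS hi; simpa [hPdef, Finset.mem_filter] using this
    have hSP' : ∀ i ∈ S', c i = 1 := by
      intro i hi; have := hS' hi; simpa [hPdef, Finset.mem_filter] using this
    have hTM : ∀ i ∈ T, c i = -1 := by
      intro i hi; have := hT hi; simpa [hMdef, Finset.mem_filter] using this
    have hTM' : ∀ i ∈ T', c i = -1 := by
      intro i hi; have := hT' hi; simpa [hMdef, Finset.mem_filter] using this
    have hUZ : ∀ i ∈ U, c i = 0 := by
      intro i hi; have := hU hi; simpa [hZdef, Finset.mem_filter] using this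
    have hUZ' : ∀ i ∈ U', c i = 0 := by
      intro i hi; have := hU' hi; simpa [hZdef, Finset.mem_filter] using this
    have hval : ∀ (V W X : Finset (Fin n)) (i : Fin n), A (V, W, X) i =
        if c i = 1 then (if i ∈ V then 2 else 1)
        else if c i = -1 then (if i ∈ W then 1 else 0)
        else (if i ∈ X then 1 else 0) := fun _ _ _ _ => rfl
    have hSeq : S = S' := by
      ext i
      constructor
      · intro hi
        have hci := hSP i hi
        have := hAx i
        rw [hval, hval] at this
        simp only [hci, if_pos rfl, if_pos hi] at this
        norm_num at this
        by_contra hi'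
        simp [hi'] at this
      · intro hi
        have hci := hSP' i hi
        have := hAx i
        rw [hval, hval] at this
        simp only [hci, if_pos rfl, if_pos hi] at this
        norm_num at this
        by_contra hi'
        simp [hi'] at this
    have hTeq : T = T' := by
      ext i
      constructor
      · intro hi
        have hci := hTM i hi
        have := hAx i
        rw [hval, hval] at this
        simp only [hci] at this
        norm_num at this
        simp only [if_pos hi] at this
        by_contra hi'
        simp [hi'] at this
      · intro hi
        have hci := hTM' i hi
        have := hAx i
        rw [hval, hval] at this
        simp only [hci] at this
        norm_num at this
        simp only [if_pos hi] at this
        by_contra hi'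
        simp [hi'] at this
    have hUeq : U = U' := by
      ext i
      constructor
      · intro hi
        have hci := hUZ i hi
        have := hAx i
        rw [hval, hval] at this
        simp only [hci] at this
        norm_num at this
        simp only [if_pos hi] at this
        by_contra hi'
        simp [hi'] at this
      · intro hi
        have hci := hUZ' i hi
        have := hAx i
        rw [hval, hval] at this
        simp only [hci] at this
        norm_num at this
        simp only [if_pos hi] at this
        by_contra hi'
        simp [hi'] at this
    simp [hSeq, hTeq, hUeq]
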